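/- Let n ≥ 2 and let G be a quotient of Γₙ, i.e. there exists a surjective group homomorphism Γₙ → G. Then (1) G has abelian centralizers, and (2) every conjugacy class of G has at most n elements. -/

import Mathlib

namespace Stmt8Aux

def dd (p : ℤ) : ℤ := if Even p then 0 else -1
def ee (p : ℤ) : ℤ := if Even p then 1 else -1

lemma ee_eq (p : ℤ) : ee p = 2 * dd p + 1 := by unfold ee dd; split <;> ring
lemma dd_zero : dd 0 = 0 := by simp [dd]
lemma ee_zero : ee 0 = 1 := by simp [ee]
lemma dd_add_one (p : ℤ) : dd (p + 1) = -1 - dd p := by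
  by_cases h : Even p <;> simp [dd, Int.even_add_one, h]
lemma dd_sub_one (p : ℤ) : dd (p - 1) = -1 - dd p := by
  by_cases h : Even p <;> simp [dd, Int.even_sub_one, h]
lemma ee_add_one (p : ℤ) : ee (p + 1) = -ee p := by
  by_cases h : Even p <;> simp [ee, Int.even_add_one, h]
lemma ee_sub_one (p : ℤ) : ee (p - 1) = -ee p := by
  by_cases h : Even p <;> simp [ee, Int.even_sub_one, h]
lemma ee_mul_self (p : ℤ) : ee p * ee p = 1 := by
  by_cases h : Even p <;> simp [ee, h]
lemma dd_cases (p : ℤ) : dd p = 0 ∨ dd p = -1 := by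
  by_cases h : Even p <;> simp [dd, h]

variable {G : Type*} [Group G] {a b z : G}

section
variable (hba : b * a = z * a * b) (haz : a * z = z⁻¹ * a) (hbz : b * z = z * b)

/-- conjugation by an element that inverts z -/
lemma azc {c : G} (hc : c * z = z⁻¹ * c) (t : ℤ) : z ^ t * c = c * z ^ (-t) := by
  have h1 : c * z * c⁻¹ = z⁻¹ := by rw [hc]; group
  have h2 : c * z ^ (-t) * c⁻¹ = z ^ t := by
    calc c * z ^ (-t) * c⁻¹ = (c * z * c⁻¹) ^ (-t) := conj_zpow.symm
      _ = (z⁻¹) ^ (-t) := by rw [h1]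
      _ = z ^ t := by group
  calc z ^ t * c = (c * z ^ (-t) * c⁻¹) * c := by rw [h2]
    _ = c * z ^ (-t) := by group

include haz in
lemma haz' : a⁻¹ * z = z⁻¹ * a⁻¹ := by
  have hz1 : z ^ (1:ℤ) * a = a * z ^ (-1:ℤ) := azc haz 1
  simp only [zpow_one, zpow_neg_one] at hz1
  calc a⁻¹ * z = a⁻¹ * (z * a) * a⁻¹ := by group
    _ = a⁻¹ * (a * z⁻¹) * a⁻¹ := by rw [hz1]
    _ = z⁻¹ * a⁻¹ := by group

include haz in
lemma zah (p : ℤ) : z * a ^ p = a ^ p * z ^ ee p := by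
  induction p using Int.induction_on with
  | zero => simp [ee_zero]
  | succ p ih =>
      calc z * a ^ ((p:ℤ) + 1) = (z * a ^ (p:ℤ)) * a := by rw [zpow_add, zpow_one, mul_assoc]
        _ = a ^ (p:ℤ) * (z ^ ee p * a) := by rw [ih]; group
        _ = a ^ (p:ℤ) * (a * z ^ (-ee p)) := by rw [azc haz]
        _ = a ^ ((p:ℤ) + 1) * z ^ ee ((p:ℤ) + 1) := by rw [ee_add_one]; group
  | pred p ih =>
      calc z * a ^ (-(p:ℤ) - 1) = (z * a ^ (-(p:ℤ))) * a⁻¹ := by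
            rw [zpow_sub, zpow_one, mul_assoc]
        _ = a ^ (-(p:ℤ)) * (z ^ ee (-(p:ℤ)) * a⁻¹) := by rw [ih]; group
        _ = a ^ (-(p:ℤ)) * (a⁻¹ * z ^ (-ee (-(p:ℤ)))) := by rw [azc (haz' haz)]
        _ = a ^ (-(p:ℤ) - 1) * z ^ ee (-(p:ℤ) - 1) := by rw [ee_sub_one]; group

include haz in
lemma zpa (p k : ℤ) : z ^ k * a ^ p = a ^ p * z ^ (k * ee p) := by
  induction k using Int.induction_on with
  | zero => simp
  | succ k ih =>
      calc z ^ ((k:ℤ) + 1) * a ^ p = z * (z ^ (k:ℤ) * a ^ p) := by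
            rw [zpow_add, zpow_one]; group
        _ = (z * a ^ p) * z ^ ((k:ℤ) * ee p) := by rw [ih]; group
        _ = a ^ p * z ^ ee p * z ^ ((k:ℤ) * ee p) := by rw [zah haz]
        _ = a ^ p * z ^ (((k:ℤ) + 1) * ee p) := by
            rw [show ((k:ℤ)+1) * ee p = ee p + (k:ℤ) * ee p by ring, zpow_add]; group
  | pred k ih =>
      have hz : z⁻¹ * a ^ p = a ^ p * z ^ (-ee p) := by
        calc z⁻¹ * a ^ p = z⁻¹ * (a ^ p * z ^ ee p) * z ^ (-ee p) := by group
          _ = z⁻¹ * (z * a ^ p) * z ^ (-ee p) := by rw [zah haz]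
          _ = a ^ p * z ^ (-ee p) := by group
      calc z ^ (-(k:ℤ) - 1) * a ^ p = z⁻¹ * (z ^ (-(k:ℤ)) * a ^ p) := by
            rw [zpow_sub, zpow_one]; group
        _ = z⁻¹ * (a ^ p * z ^ (-(k:ℤ) * ee p)) := by rw [ih]
        _ = (z⁻¹ * a ^ p) * z ^ (-(k:ℤ) * ee p) := by group
        _ = a ^ p * z ^ (-ee p) * z ^ (-(k:ℤ) * ee p) := by rw [hz]
        _ = a ^ p * z ^ ((-(k:ℤ) - 1) * ee p) := by
            rw [show (-(k:ℤ)-1) * ee p = -ee p + (-(k:ℤ)) * ee p by ring, zpow_add]; group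

include hbz in
lemma zb (t s : ℤ) : z ^ t * b ^ s = b ^ s * z ^ t := by
  have cbz : Commute b z := hbz
  exact (cbz.zpow_zpow s t).eq.symm

include hbz in
lemma zbe (t : ℤ) : z ^ t * b = b * z ^ t := by
  have h := zb hbz t 1
  simpa using h

include hba haz hbz in
lemma bap (p : ℤ) : b * a ^ p = a ^ p * b * z ^ dd p := by
  have hz1 : ∀ t : ℤ, z ^ t * a = a * z ^ (-t) := fun t => azc haz t
  have hbainv : b * a⁻¹ = a⁻¹ * z⁻¹ * b := by
    have h1 : a * b = z⁻¹ * b * a := by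
      rw [show z⁻¹ * b * a = z⁻¹ * (b * a) by group, hba]; group
    calc b * a⁻¹ = a⁻¹ * (a * b) * a⁻¹ := by group
      _ = a⁻¹ * (z⁻¹ * b * a) * a⁻¹ := by rw [h1]
      _ = a⁻¹ * z⁻¹ * b := by group
  induction p using Int.induction_on with
  | zero => simp [dd_zero]
  | succ p ih =>
      calc b * a ^ ((p:ℤ) + 1) = (b * a ^ (p:ℤ)) * a := by rw [zpow_add, zpow_one, mul_assoc]
        _ = a ^ (p:ℤ) * b * (z ^ dd p * a) := by rw [ih]; group
        _ = a ^ (p:ℤ) * b * (a * z ^ (-dd p)) := by rw [hz1]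
        _ = a ^ (p:ℤ) * (b * a) * z ^ (-dd p) := by group
        _ = a ^ (p:ℤ) * (z * a * b) * z ^ (-dd p) := by rw [hba]
        _ = a ^ (p:ℤ) * (z ^ (1:ℤ) * a) * b * z ^ (-dd p) := by group
        _ = a ^ (p:ℤ) * (a * z ^ (-1:ℤ)) * b * z ^ (-dd p) := by rw [hz1]
        _ = a ^ ((p:ℤ) + 1) * (z ^ (-1:ℤ) * b) * z ^ (-dd p) := by group
        _ = a ^ ((p:ℤ) + 1) * (b * z ^ (-1:ℤ)) * z ^ (-dd p) := by rw [zbe hbz]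
        _ = a ^ ((p:ℤ) + 1) * b * z ^ dd ((p:ℤ) + 1) := by
            rw [dd_add_one, show (-1 : ℤ) - dd p = -1 + -dd p by ring, zpow_add]; group
  | pred p ih =>
      calc b * a ^ (-(p:ℤ) - 1) = (b * a ^ (-(p:ℤ))) * a⁻¹ := by
            rw [zpow_sub, zpow_one, mul_assoc]
        _ = a ^ (-(p:ℤ)) * b * (z ^ dd (-(p:ℤ)) * a⁻¹) := by rw [ih]; group
        _ = a ^ (-(p:ℤ)) * b * (a⁻¹ * z ^ (-dd (-(p:ℤ)))) := by rw [azc (haz' haz)]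
        _ = a ^ (-(p:ℤ)) * (b * a⁻¹) * z ^ (-dd (-(p:ℤ))) := by group
        _ = a ^ (-(p:ℤ)) * (a⁻¹ * z⁻¹ * b) * z ^ (-dd (-(p:ℤ))) := by rw [hbainv]
        _ = a ^ (-(p:ℤ) - 1) * (z ^ (-1:ℤ) * b) * z ^ (-dd (-(p:ℤ))) := by group
        _ = a ^ (-(p:ℤ) - 1) * (b * z ^ (-1:ℤ)) * z ^ (-dd (-(p:ℤ))) := by rw [zbe hbz]
        _ = a ^ (-(p:ℤ) - 1) * b * z ^ dd (-(p:ℤ) - 1) := by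
            rw [dd_sub_one, show (-1 : ℤ) - dd (-(p:ℤ)) = -1 + -dd (-(p:ℤ)) by ring, zpow_add]
            group

include hba haz hbz in
lemma bjap (p j : ℤ) : b ^ j * a ^ p = a ^ p * b ^ j * z ^ (j * dd p) := by
  have hbinv : b⁻¹ * a ^ p = a ^ p * z ^ (-dd p) * b⁻¹ := by
    calc b⁻¹ * a ^ p = b⁻¹ * ((a ^ p * b * z ^ dd p) * z ^ (-dd p) * b⁻¹) := by group
      _ = b⁻¹ * ((b * a ^ p) * z ^ (-dd p) * b⁻¹) := by rw [← bap hba haz hbz]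
      _ = a ^ p * z ^ (-dd p) * b⁻¹ := by group
  induction j using Int.induction_on with
  | zero => simp
  | succ j ih =>
      calc b ^ ((j:ℤ) + 1) * a ^ p = b * (b ^ (j:ℤ) * a ^ p) := by
            rw [zpow_add, zpow_one]; group
        _ = (b * a ^ p) * b ^ (j:ℤ) * z ^ ((j:ℤ) * dd p) := by rw [ih]; group
        _ = a ^ p * b * (z ^ dd p * b ^ (j:ℤ)) * z ^ ((j:ℤ) * dd p) := by
            rw [bap hba haz hbz]; group
        _ = a ^ p * b * (b ^ (j:ℤ) * z ^ dd p) * z ^ ((j:ℤ) * dd p) := by rw [zb hbz]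
        _ = a ^ p * b ^ ((j:ℤ) + 1) * z ^ (((j:ℤ) + 1) * dd p) := by
            rw [show ((j:ℤ)+1) * dd p = dd p + (j:ℤ) * dd p by ring, zpow_add]; group
  | pred j ih =>
      calc b ^ (-(j:ℤ) - 1) * a ^ p = b⁻¹ * (b ^ (-(j:ℤ)) * a ^ p) := by
            rw [zpow_sub, zpow_one]; group
        _ = (b⁻¹ * a ^ p) * b ^ (-(j:ℤ)) * z ^ (-(j:ℤ) * dd p) := by rw [ih]; group
        _ = a ^ p * z ^ (-dd p) * b⁻¹ * b ^ (-(j:ℤ)) * z ^ (-(j:ℤ) * dd p) := by rw [hbinv]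
        _ = a ^ p * (z ^ (-dd p) * b ^ (-(j:ℤ) - 1)) * z ^ (-(j:ℤ) * dd p) := by group
        _ = a ^ p * (b ^ (-(j:ℤ) - 1) * z ^ (-dd p)) * z ^ (-(j:ℤ) * dd p) := by rw [zb hbz]
        _ = a ^ p * b ^ (-(j:ℤ) - 1) * z ^ ((-(j:ℤ) - 1) * dd p) := by
            rw [show (-(j:ℤ)-1) * dd p = -dd p + (-(j:ℤ)) * dd p by ring, zpow_add]; group

include hba haz hbz in
lemma mulf (i j k p q r : ℤ) :
    (a ^ i * b ^ j * z ^ k) * (a ^ p * b ^ q * z ^ r)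
      = a ^ (i + p) * b ^ (j + q) * z ^ (j * dd p + k * ee p + r) := by
  calc (a ^ i * b ^ j * z ^ k) * (a ^ p * b ^ q * z ^ r)
      = a ^ i * (b ^ j * (z ^ k * a ^ p)) * b ^ q * z ^ r := by group
    _ = a ^ i * (b ^ j * (a ^ p * z ^ (k * ee p))) * b ^ q * z ^ r := by rw [zpa haz]
    _ = a ^ i * (b ^ j * a ^ p) * (z ^ (k * ee p) * b ^ q) * z ^ r := by group
    _ = a ^ i * (a ^ p * b ^ j * z ^ (j * dd p)) * (b ^ q * z ^ (k * ee p)) * z ^ r := by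
        rw [bjap hba haz hbz, zb hbz]
    _ = a ^ (i + p) * b ^ j * (z ^ (j * dd p) * b ^ q) * z ^ (k * ee p) * z ^ r := by group
    _ = a ^ (i + p) * b ^ j * (b ^ q * z ^ (j * dd p)) * z ^ (k * ee p) * z ^ r := by rw [zb hbz]
    _ = a ^ (i + p) * b ^ (j + q) * z ^ (j * dd p + k * ee p + r) := by group

include hba haz hbz in
lemma commute_iff (i j k p q r : ℤ) :
    (a ^ i * b ^ j * z ^ k) * (a ^ p * b ^ q * z ^ r)
      = (a ^ p * b ^ q * z ^ r) * (a ^ i * b ^ j * z ^ k)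
    ↔ z ^ (dd p * (j + 2 * k) - dd i * (q + 2 * r)) = 1 := by
  rw [mulf hba haz hbz, mulf hba haz hbz, add_comm p i, add_comm q j, mul_right_inj,
    ← mul_inv_eq_one, ← zpow_sub,
    show j * dd p + k * ee p + r - (q * dd i + r * ee i + k)
        = dd p * (j + 2 * k) - dd i * (q + 2 * r) by simp only [ee_eq]; ring]

include haz hbz in
lemma zpow_word (t i j k : ℤ) :
    z ^ t * (a ^ i * b ^ j * z ^ k) = a ^ i * b ^ j * z ^ (k + t * ee i) := by
  calc z ^ t * (a ^ i * b ^ j * z ^ k) = (z ^ t * a ^ i) * b ^ j * z ^ k := by group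
    _ = (a ^ i * z ^ (t * ee i)) * b ^ j * z ^ k := by rw [zpa haz]
    _ = a ^ i * (z ^ (t * ee i) * b ^ j) * z ^ k := by group
    _ = a ^ i * (b ^ j * z ^ (t * ee i)) * z ^ k := by rw [zb hbz]
    _ = a ^ i * b ^ j * z ^ (k + t * ee i) := by rw [zpow_add]; group

include haz hbz in
lemma conj_z (P Q R t : ℤ) :
    (a ^ P * b ^ Q * z ^ R) * z ^ t * (a ^ P * b ^ Q * z ^ R)⁻¹ = z ^ (t * ee P) := by
  have h : z ^ (t * ee P) * (a ^ P * b ^ Q * z ^ R) = (a ^ P * b ^ Q * z ^ R) * z ^ t := by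
    calc z ^ (t * ee P) * (a ^ P * b ^ Q * z ^ R)
        = a ^ P * b ^ Q * z ^ (R + t * ee P * ee P) := by rw [zpow_word haz hbz]
      _ = a ^ P * b ^ Q * z ^ (R + t) := by rw [mul_assoc t, ee_mul_self, mul_one]
      _ = (a ^ P * b ^ Q * z ^ R) * z ^ t := by rw [zpow_add]; group
  rw [← h]; group

include hba haz hbz in
lemma conj_word (i j k P Q R : ℤ) :
    ∃ v : ℤ, (a ^ P * b ^ Q * z ^ R) * (a ^ i * b ^ j * z ^ k) * (a ^ P * b ^ Q * z ^ R)⁻¹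
      = z ^ v * (a ^ i * b ^ j * z ^ k) := by
  have h1 : (a ^ P * b ^ Q * z ^ R) * (a ^ i * b ^ j * z ^ k)
      = (a ^ i * b ^ j * z ^ k) * (a ^ P * b ^ Q * z ^ R)
        * z ^ ((Q * dd i + R * ee i + k) - (j * dd P + k * ee P + R)) := by
    rw [mulf hba haz hbz, mulf hba haz hbz, add_comm i P, add_comm j Q]
    conv_rhs => rw [mul_assoc, ← zpow_add]
    congr 1
    ring_nf
  set s : ℤ := (Q * dd i + R * ee i + k) - (j * dd P + k * ee P + R) with hs
  have h2 : (a ^ P * b ^ Q * z ^ R) * z ^ s * (a ^ P * b ^ Q * z ^ R)⁻¹ = z ^ (s * ee P) :=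
    conj_z haz hbz P Q R s
  have h3 : (a ^ P * b ^ Q * z ^ R) * (a ^ i * b ^ j * z ^ k) * (a ^ P * b ^ Q * z ^ R)⁻¹
      = (a ^ i * b ^ j * z ^ k) * z ^ (s * ee P) := by
    calc (a ^ P * b ^ Q * z ^ R) * (a ^ i * b ^ j * z ^ k) * (a ^ P * b ^ Q * z ^ R)⁻¹
        = ((a ^ i * b ^ j * z ^ k) * (a ^ P * b ^ Q * z ^ R) * z ^ s)
            * (a ^ P * b ^ Q * z ^ R)⁻¹ := by rw [h1]
      _ = (a ^ i * b ^ j * z ^ k)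
            * ((a ^ P * b ^ Q * z ^ R) * z ^ s * (a ^ P * b ^ Q * z ^ R)⁻¹) := by group
      _ = (a ^ i * b ^ j * z ^ k) * z ^ (s * ee P) := by rw [h2]
  refine ⟨s * ee P * ee i, ?_⟩
  rw [h3]
  calc (a ^ i * b ^ j * z ^ k) * z ^ (s * ee P)
      = a ^ i * b ^ j * z ^ (k + s * ee P) := by rw [zpow_add]; group
    _ = z ^ (s * ee P * ee i) * (a ^ i * b ^ j * z ^ k) := by
        rw [zpow_word haz hbz, mul_assoc (s * ee P), ee_mul_self, mul_one]

include hba haz hbz in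
lemma invf (i j k : ℤ) :
    (a ^ i * b ^ j * z ^ k)⁻¹
      = a ^ (-i) * b ^ (-j) * z ^ (-(j * dd (-i) + k * ee (-i))) := by
  apply inv_eq_of_mul_eq_one_right
  rw [mulf hba haz hbz]
  simp

end
end Stmt8Aux

/-- The defining relations of the group
`Γₙ = ⟨g, h, ε ∣ hg = εgh, gε = ε⁻¹g, hε = εh, εⁿ = 1⟩`,
with generators `0 ↦ g`, `1 ↦ h`, `2 ↦ ε`. -/
def GammaRels (n : ℕ) : Set (FreeGroup (Fin 3)) :=
  { FreeGroup.of 1 * FreeGroup.of 0 * (FreeGroup.of 2 * FreeGroup.of 0 * FreeGroup.of 1)⁻¹,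
    FreeGroup.of 0 * FreeGroup.of 2 * ((FreeGroup.of 2)⁻¹ * FreeGroup.of 0)⁻¹,
    FreeGroup.of 1 * FreeGroup.of 2 * (FreeGroup.of 2 * FreeGroup.of 1)⁻¹,
    (FreeGroup.of 2) ^ n }

/-- The group `Γₙ = ⟨g, h, ε ∣ hg = εgh, gε = ε⁻¹g, hε = εh, εⁿ = 1⟩`. -/
def Gamma (n : ℕ) : Type := PresentedGroup (GammaRels n)

instance (n : ℕ) : Group (Gamma n) := inferInstanceAs (Group (PresentedGroup (GammaRels n)))

/-- A group has abelian centralizers if the centralizer of every non-central element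
is abelian. -/
def HasAbelianCentralizers (G : Type) [Group G] : Prop :=
  ∀ x : G, x ∉ Subgroup.center G →
    ∀ a ∈ Subgroup.centralizer {x}, ∀ b ∈ Subgroup.centralizer {x}, a * b = b * a

open Stmt8Aux

theorem stmt8 (n : ℕ) (hn : 2 ≤ n) (G : Type) [Group G]
    (f : Gamma n →* G) (hf : Function.Surjective f) :
    HasAbelianCentralizers G ∧
    ∀ x : G, {y : G | IsConj x y}.Finite ∧ Set.ncard {y : G | IsConj x y} ≤ n := by
  classical
  set φ : FreeGroup (Fin 3) →* G :=
    MonoidHom.comp (f : PresentedGroup (GammaRels n) →* G) (PresentedGroup.mk (GammaRels n))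
      with hφdef
  have hφ : Function.Surjective φ := by
    intro y
    obtain ⟨u, hu⟩ := hf y
    obtain ⟨v, hv⟩ :=
      PresentedGroup.mk_surjective (GammaRels n) (u : PresentedGroup (GammaRels n))
    refine ⟨v, ?_⟩
    show f (PresentedGroup.mk (GammaRels n) v) = y
    rw [hv]; exact hu
  have hrel : ∀ r ∈ GammaRels n, φ r = 1 := by
    intro r hr
    show f (PresentedGroup.mk (GammaRels n) r) = 1
    have h1 : PresentedGroup.mk (GammaRels n) r = 1 :=
      (QuotientGroup.eq_one_iff r).mpr (Subgroup.subset_normalClosure hr)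
    rw [h1]; exact map_one f
  set A : G := φ (FreeGroup.of 0) with hA
  set B : G := φ (FreeGroup.of 1) with hB
  set Z : G := φ (FreeGroup.of 2) with hZ
  have hba : B * A = Z * A * B := by
    have h := hrel _ (Set.mem_insert _ _)
    simp only [map_mul, map_inv] at h
    rw [hA, hB, hZ]
    exact mul_inv_eq_one.mp h
  have haz : A * Z = Z⁻¹ * A := by
    have h := hrel _ (Set.mem_insert_of_mem _ (Set.mem_insert _ _))
    simp only [map_mul, map_inv] at h
    rw [hA, hZ]
    exact mul_inv_eq_one.mp h
  have hbz : B * Z = Z * B := by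
    have h := hrel _ (Set.mem_insert_of_mem _ (Set.mem_insert_of_mem _ (Set.mem_insert _ _)))
    simp only [map_mul, map_inv] at h
    rw [hB, hZ]
    exact mul_inv_eq_one.mp h
  have hzn : Z ^ n = 1 := by
    have h := hrel _
      (Set.mem_insert_of_mem _ (Set.mem_insert_of_mem _ (Set.mem_insert_of_mem _ rfl)))
    rw [map_pow] at h
    rw [hZ]
    exact h
  have rep : ∀ u : G, ∃ i j k : ℤ, u = A ^ i * B ^ j * Z ^ k := by
    intro u
    obtain ⟨v, rfl⟩ := hφ u
    induction v using FreeGroup.induction_on with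
    | C1 => exact ⟨0, 0, 0, by simp⟩
    | of x =>
        fin_cases x
        · refine ⟨1, 0, 0, ?_⟩
          show φ (FreeGroup.of (0 : Fin 3)) = _
          rw [← hA]; group
        · refine ⟨0, 1, 0, ?_⟩
          show φ (FreeGroup.of (1 : Fin 3)) = _
          rw [← hB]; group
        · refine ⟨0, 0, 1, ?_⟩
          show φ (FreeGroup.of (2 : Fin 3)) = _
          rw [← hZ]; group
    | inv_of x _ =>
        fin_cases x
        · refine ⟨-1, 0, 0, ?_⟩
          show φ ((FreeGroup.of (0 : Fin 3))⁻¹) = _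
          rw [map_inv, ← hA]; group
        · refine ⟨0, -1, 0, ?_⟩
          show φ ((FreeGroup.of (1 : Fin 3))⁻¹) = _
          rw [map_inv, ← hB]; group
        · refine ⟨0, 0, -1, ?_⟩
          show φ ((FreeGroup.of (2 : Fin 3))⁻¹) = _
          rw [map_inv, ← hZ]; group
    | mul x y ihx ihy =>
        obtain ⟨i, j, k, hx'⟩ := ihx
        obtain ⟨p, q, r, hy'⟩ := ihy
        exact ⟨i + p, j + q, j * dd p + k * ee p + r, by
          rw [map_mul, hx', hy', mulf hba haz hbz]⟩
  constructor
  · -- abelian centralizers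
    intro x hx u hu v hv
    obtain ⟨i, j, k, rfl⟩ := rep x
    obtain ⟨p1, q1, r1, rfl⟩ := rep u
    obtain ⟨p2, q2, r2, rfl⟩ := rep v
    have c1 : Z ^ (dd p1 * (j + 2 * k) - dd i * (q1 + 2 * r1)) = 1 :=
      (commute_iff hba haz hbz i j k p1 q1 r1).mp
        (Subgroup.mem_centralizer_iff.mp hu _ rfl)
    have c2 : Z ^ (dd p2 * (j + 2 * k) - dd i * (q2 + 2 * r2)) = 1 :=
      (commute_iff hba haz hbz i j k p2 q2 r2).mp
        (Subgroup.mem_centralizer_iff.mp hv _ rfl)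
    apply (commute_iff hba haz hbz p1 q1 r1 p2 q2 r2).mpr
    by_cases hi : Even i
    · have hdi : dd i = 0 := by simp [dd, hi]
      have hw : Z ^ (j + 2 * k) ≠ 1 := by
        intro hw1
        apply hx
        rw [Subgroup.mem_center_iff]
        intro g
        obtain ⟨p, q, r, rfl⟩ := rep g
        apply (commute_iff hba haz hbz p q r i j k).mpr
        rcases dd_cases p with h0 | h1
        · rw [hdi, h0]; simp
        · rw [hdi, h1,
            show (0 : ℤ) * (q + 2 * r) - -1 * (j + 2 * k) = j + 2 * k by ring]
          exact hw1
      have key : ∀ p' q' r' : ℤ,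
          Z ^ (dd p' * (j + 2 * k) - dd i * (q' + 2 * r')) = 1 → dd p' = 0 := by
        intro p' q' r' hc
        rcases dd_cases p' with h0 | h1
        · exact h0
        · exfalso
          apply hw
          rw [hdi, h1,
            show (-1 : ℤ) * (j + 2 * k) - 0 * (q' + 2 * r') = -(j + 2 * k) by ring,
            zpow_neg, inv_eq_one] at hc
          exact hc
      rw [key p1 q1 r1 c1, key p2 q2 r2 c2]
      simp
    · have hdi : dd i = -1 := by simp [dd, hi]
      rw [hdi] at c1 c2
      have e1 : Z ^ (q1 + 2 * r1) = (Z ^ (dd p1 * (j + 2 * k)))⁻¹ := by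
        rw [show dd p1 * (j + 2 * k) - -1 * (q1 + 2 * r1)
            = dd p1 * (j + 2 * k) + (q1 + 2 * r1) by ring, zpow_add] at c1
        exact (mul_eq_one_iff_inv_eq.mp c1).symm
      have e2 : Z ^ (q2 + 2 * r2) = (Z ^ (dd p2 * (j + 2 * k)))⁻¹ := by
        rw [show dd p2 * (j + 2 * k) - -1 * (q2 + 2 * r2)
            = dd p2 * (j + 2 * k) + (q2 + 2 * r2) by ring, zpow_add] at c2
        exact (mul_eq_one_iff_inv_eq.mp c2).symm
      have hsplit : Z ^ (dd p2 * (q1 + 2 * r1) - dd p1 * (q2 + 2 * r2)) =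
          (Z ^ (q1 + 2 * r1)) ^ dd p2 * ((Z ^ (q2 + 2 * r2)) ^ dd p1)⁻¹ := by
        rw [← zpow_mul, ← zpow_mul, ← zpow_neg, ← zpow_add]
        congr 1
        ring
      rw [hsplit, e1, e2, inv_zpow, inv_zpow, inv_inv, ← zpow_mul, ← zpow_mul,
        inv_mul_eq_one]
      congr 1
      ring
  · -- conjugacy classes
    intro x
    obtain ⟨i, j, k, rfl⟩ := rep x
    set T : Set G := (fun t : ℤ => Z ^ t * (A ^ i * B ^ j * Z ^ k)) '' Set.Ico (0 : ℤ) (n : ℤ)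
      with hT
    have hn0 : (0 : ℤ) < (n : ℤ) := by exact_mod_cast Nat.lt_of_lt_of_le (by norm_num) hn
    have hsub : {y : G | IsConj (A ^ i * B ^ j * Z ^ k) y} ⊆ T := by
      intro y hy
      obtain ⟨c, hc⟩ := isConj_iff.mp hy
      obtain ⟨P, Q, R, rfl⟩ := rep c
      obtain ⟨v, hv⟩ := conj_word hba haz hbz i j k P Q R
      have hy' : y = Z ^ v * (A ^ i * B ^ j * Z ^ k) := by rw [← hc, hv]
      have hzv : Z ^ v = Z ^ (v % (n : ℤ)) := by
        conv_lhs => rw [← Int.mul_ediv_add_emod v (n : ℤ)]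
        rw [zpow_add, zpow_mul,
          show (Z : G) ^ ((n : ℕ) : ℤ) = 1 by rw [zpow_natCast]; exact hzn,
          one_zpow, one_mul]
      refine ⟨v % (n : ℤ), ⟨Int.emod_nonneg v (by omega), Int.emod_lt_of_pos v hn0⟩, ?_⟩
      show Z ^ (v % (n : ℤ)) * (A ^ i * B ^ j * Z ^ k) = y
      rw [← hzv]
      exact hy'.symm
    have hTfin : T.Finite := (Set.finite_Ico (0 : ℤ) (n : ℤ)).image _
    constructor
    · exact hTfin.subset hsub
    · calc {y : G | IsConj (A ^ i * B ^ j * Z ^ k) y}.ncard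
          ≤ T.ncard := Set.ncard_le_ncard hsub hTfin
        _ ≤ (Set.Ico (0 : ℤ) (n : ℤ)).ncard := Set.ncard_image_le (Set.finite_Ico _ _)
        _ ≤ n := by
            rw [← Finset.coe_Ico, Set.ncard_coe_finset, Int.card_Ico]
            simp
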